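/- If X, X_1, X_2, ... are i.i.d. with E[|X|^α] < ∞ for some α > 2 and E[X] = 0, then for any p with 2 < p ≤ α and any β > (p+2)/2, ∑_{n=1}^∞ n^{-β} E[|S_n|^p] < ∞. -/

import Mathlib

open MeasureTheory ProbabilityTheory

open Filter

lemma sq_rpow_eq (x r : ℝ) : (x^2 : ℝ) ^ r = |x| ^ (2*r) := by
  rw [← sq_abs, ← Real.rpow_natCast |x| 2, ← Real.rpow_mul (abs_nonneg x)]
  norm_num

lemma hasDerivAt_F {p : ℝ} (hp : 2 < p) (x : ℝ) :
    HasDerivAt (fun y : ℝ => (y^2) ^ (p/2)) (p * x * (x^2) ^ ((p-2)/2)) x := by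
  have h1 : HasDerivAt (fun y : ℝ => y^2) (2*x) x := by
    simpa using hasDerivAt_pow 2 x
  have h3 := h1.rpow_const (p := p/2) (Or.inr (by linarith))
  have he : (p:ℝ)/2 - 1 = (p-2)/2 := by ring
  convert h3 using 1
  rw [he]; ring

lemma hasDerivAt_G {p : ℝ} (hp : 2 < p) (x : ℝ) :
    HasDerivAt (fun y : ℝ => p * y * (y^2) ^ ((p-2)/2)) (p * (p-1) * (x^2) ^ ((p-2)/2)) x := by
  rcases eq_or_ne x 0 with rfl | hx
  · have h0 : ((0:ℝ)^2) ^ ((p-2)/2) = 0 := by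
      rw [zero_pow (by norm_num), Real.zero_rpow (by linarith : (0:ℝ) < (p-2)/2).ne']
    rw [h0, mul_zero, hasDerivAt_iff_tendsto_slope]
    have hcont : ContinuousAt (fun y : ℝ => p * (y^2) ^ ((p-2)/2)) 0 := by
      apply ContinuousAt.mul continuousAt_const
      exact (Real.continuousAt_rpow_const _ _ (Or.inr (by linarith))).comp
        (continuous_pow 2).continuousAt
    have h2 : Tendsto (fun y : ℝ => p * (y^2) ^ ((p-2)/2)) (nhdsWithin 0 {(0:ℝ)}ᶜ) (nhds 0) := by
      have h2' := (hcont.continuousWithinAt (s := {(0:ℝ)}ᶜ)).tendsto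
      simpa [Real.zero_rpow (show ((p-2)/2:ℝ) ≠ 0 from (by linarith : (0:ℝ)<(p-2)/2).ne')] using h2'
    refine h2.congr' ?_
    filter_upwards [self_mem_nhdsWithin] with y hy
    have hy' : (y:ℝ) ≠ 0 := hy
    simp only [slope_def_field]
    field_simp
    ring
  · have hx2 : (x^2 : ℝ) ≠ 0 := pow_ne_zero 2 hx
    have hx2p : (0:ℝ) < x^2 := by positivity
    have h1 : HasDerivAt (fun y : ℝ => y^2) (2*x) x := by
      simpa using hasDerivAt_pow 2 x
    have h3 : HasDerivAt (fun y : ℝ => (y^2) ^ ((p-2)/2))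
        (2*x * ((p-2)/2) * (x^2) ^ ((p-2)/2 - 1)) x :=
      h1.rpow_const (Or.inl hx2)
    have h4 : HasDerivAt (fun y : ℝ => p * y * (y^2) ^ ((p-2)/2)) (p * 1 * (x^2) ^ ((p-2)/2) + p * x * (2*x * ((p-2)/2) * (x^2) ^ ((p-2)/2 - 1))) x := ((hasDerivAt_id x).const_mul p).mul h3
    convert h4 using 1
    have key : (x^2) ^ ((p-2)/2) = (x^2) * (x^2) ^ ((p-2)/2 - 1) := by
      nth_rewrite 1 [show ((p-2)/2 : ℝ) = 1 + ((p-2)/2 - 1) by ring]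
      rw [Real.rpow_one_add' (le_of_lt hx2p) (by rw [show (1:ℝ) + ((p-2)/2 - 1) = (p-2)/2 by ring]; exact (by linarith : (0:ℝ) < (p-2)/2).ne')]
    rw [key]; ring

lemma G_lip {p : ℝ} (hp : 2 < p) {R : ℝ} {u v : ℝ}
    (hu : u ∈ Set.Icc (-R) R) (hv : v ∈ Set.Icc (-R) R) :
    |(p * u * (u^2) ^ ((p-2)/2)) - (p * v * (v^2) ^ ((p-2)/2))| ≤ p*(p-1)*R^(p-2) * |u - v| := by
  have hbound : ∀ x ∈ Set.Icc (-R) R, ‖p * (p-1) * (x^2) ^ ((p-2)/2)‖ ≤ p*(p-1)*R^(p-2) := by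
    intro x hx
    have hxR : |x| ≤ R := abs_le.2 ⟨hx.1, hx.2⟩
    have h1 : (x^2 : ℝ) ^ ((p-2)/2) = |x| ^ (p-2) := by
      rw [sq_rpow_eq, show 2*((p-2)/2) = p-2 by ring]
    have hpp : (0:ℝ) ≤ p*(p-1) := by nlinarith
    rw [Real.norm_eq_abs, h1,
      abs_of_nonneg (mul_nonneg hpp (Real.rpow_nonneg (abs_nonneg x) _))]
    exact mul_le_mul_of_nonneg_left
      (Real.rpow_le_rpow (abs_nonneg x) hxR (by linarith)) hpp
  have := Convex.norm_image_sub_le_of_norm_hasDerivWithin_le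
    (f := fun y : ℝ => p * y * (y^2) ^ ((p-2)/2))
    (f' := fun x => p * (p-1) * (x^2) ^ ((p-2)/2)) (C := p*(p-1)*R^(p-2))
    (fun x _ => (hasDerivAt_G hp x).hasDerivWithinAt) hbound (convex_Icc _ _) hv hu
  simpa [Real.norm_eq_abs] using this

lemma abs_rpow_sub_two_mul_sq {p : ℝ} (hp : 2 < p) (b : ℝ) : |b| ^ (p-2) * b^2 = |b| ^ p := by
  rcases eq_or_ne b 0 with rfl | hb
  · simp [Real.zero_rpow (show p - 2 ≠ 0 by linarith), Real.zero_rpow (show p ≠ 0 by linarith)]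
  · rw [← sq_abs, ← Real.rpow_natCast |b| 2, ← Real.rpow_add (abs_pos.2 hb)]
    norm_num

lemma key_ineq {p : ℝ} (hp : 2 < p) (a b : ℝ) :
    |a+b| ^ p ≤ |a| ^ p + (p * a * |a| ^ (p-2)) * b
      + p*(p-1)*2^(p-2) * (|a| ^ (p-2) * b^2 + |b| ^ p) := by
  set G : ℝ → ℝ := fun y => p * y * (y^2) ^ ((p-2)/2) with hG
  set R : ℝ := |a| + |b| with hRdef
  set h : ℝ → ℝ := fun t => (((a + t*b)^2) ^ (p/2)) - t * (G a * b) with hh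
  have hmem : ∀ t : ℝ, t ∈ Set.Icc (0:ℝ) 1 → (a + t*b) ∈ Set.Icc (-R) R := by
    intro t ht
    have : |a + t*b| ≤ R := by
      calc |a + t*b| ≤ |a| + |t*b| := abs_add_le _ _
        _ ≤ |a| + |b| := by
            rw [abs_mul]
            have : |t| ≤ 1 := abs_le.2 ⟨by linarith [ht.1], ht.2⟩
            nlinarith [abs_nonneg b, abs_nonneg t]
    exact abs_le.1 this
  have hamem : a ∈ Set.Icc (-R) R := by
    refine abs_le.1 ?_
    simp only [hRdef]
    nlinarith [abs_nonneg b]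
  have hder : ∀ t : ℝ, HasDerivAt h (G (a + t*b) * b - G a * b) t := by
    intro t
    have hinner : HasDerivAt (fun t : ℝ => a + t*b) b t := by
      simpa using ((hasDerivAt_id t).mul_const b).const_add a
    have h1 := (hasDerivAt_F hp (a + t*b)).comp t hinner
    have h2 := h1.sub ((hasDerivAt_id t).mul_const (G a * b))
    simp only [Function.comp, id_eq, one_mul] at h2
    exact h2
  have hbound : ∀ t ∈ Set.Icc (0:ℝ) 1, ‖G (a + t*b) * b - G a * b‖ ≤ (p*(p-1)*R^(p-2)*b^2) := by
    intro t ht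
    rw [Real.norm_eq_abs, ← sub_mul, abs_mul]
    have h2 := G_lip hp (hmem t ht) hamem
    have h3 : |(a + t*b) - a| = |t*b| := by ring_nf
    have h4 : |t*b| ≤ |b| := by
      rw [abs_mul]
      have : |t| ≤ 1 := abs_le.2 ⟨by linarith [ht.1], ht.2⟩
      nlinarith [abs_nonneg b, abs_nonneg t]
    have h5 : |G (a+t*b) - G a| ≤ p*(p-1)*R^(p-2) * |b| := by
      calc |G (a+t*b) - G a| ≤ p*(p-1)*R^(p-2) * |(a+t*b) - a| := h2
        _ = p*(p-1)*R^(p-2) * |t*b| := by rw [h3]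
        _ ≤ p*(p-1)*R^(p-2) * |b| := by
            have hR0 : (0:ℝ) ≤ R := by rw [hRdef]; positivity
            have hpp : (0:ℝ) ≤ p*(p-1) := by nlinarith
            exact mul_le_mul_of_nonneg_left h4
              (mul_nonneg hpp (Real.rpow_nonneg hR0 _))
    calc |G (a+t*b) - G a| * |b| ≤ (p*(p-1)*R^(p-2) * |b|) * |b| :=
          mul_le_mul_of_nonneg_right h5 (abs_nonneg b)
      _ = p*(p-1)*R^(p-2)*(|b| * |b|) := by ring
      _ = p*(p-1)*R^(p-2)*b^2 := by rw [abs_mul_abs_self]; ring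
  have hMVT := Convex.norm_image_sub_le_of_norm_hasDerivWithin_le
    (f := h) (f' := fun t => G (a + t*b) * b - G a * b) (C := p*(p-1)*R^(p-2)*b^2)
    (fun t _ => (hder t).hasDerivWithinAt) hbound (convex_Icc _ _)
    (Set.left_mem_Icc.2 zero_le_one) (Set.right_mem_Icc.2 zero_le_one)
  rw [Real.norm_eq_abs] at hMVT
  have hMVT2 : h 1 - h 0 ≤ p*(p-1)*R^(p-2)*b^2 := by
    have := (abs_le.1 (by simpa using hMVT)).2
    linarith [this]
  have e1 : h 1 = |a+b| ^ p - G a * b := by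
    simp only [hh, one_mul]
    rw [sq_rpow_eq, show 2*(p/2) = p by ring]
  have e2 : h 0 = |a| ^ p := by
    simp only [hh, zero_mul, add_zero, sub_zero]
    rw [sq_rpow_eq, show 2*(p/2) = p by ring]
  have e3 : G a = p * a * |a| ^ (p-2) := by
    simp only [hG]
    rw [sq_rpow_eq, show 2*((p-2)/2) = p-2 by ring]
  have hRb : R^(p-2) ≤ 2^(p-2) * (|a|^(p-2) + |b|^(p-2)) := by
    rcases le_total |a| |b| with hab | hab
    · calc R^(p-2) ≤ (2*|b|)^(p-2) :=
            Real.rpow_le_rpow (by positivity) (by simp only [hRdef]; linarith) (by linarith)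
        _ = 2^(p-2) * |b|^(p-2) := Real.mul_rpow (by norm_num) (abs_nonneg b)
        _ ≤ 2^(p-2) * (|a|^(p-2) + |b|^(p-2)) := by
            have : (0:ℝ) ≤ |a|^(p-2) := by positivity
            nlinarith [Real.rpow_nonneg (by norm_num : (0:ℝ) ≤ 2) (p-2)]
    · calc R^(p-2) ≤ (2*|a|)^(p-2) :=
            Real.rpow_le_rpow (by positivity) (by simp only [hRdef]; linarith) (by linarith)
        _ = 2^(p-2) * |a|^(p-2) := Real.mul_rpow (by norm_num) (abs_nonneg a)
        _ ≤ 2^(p-2) * (|a|^(p-2) + |b|^(p-2)) := by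
            have : (0:ℝ) ≤ |b|^(p-2) := by positivity
            nlinarith [Real.rpow_nonneg (by norm_num : (0:ℝ) ≤ 2) (p-2)]
  have hfinal : p*(p-1)*R^(p-2)*b^2 ≤ p*(p-1)*2^(p-2) * (|a| ^ (p-2) * b^2 + |b| ^ p) := by
    have h6 : p*(p-1)*R^(p-2)*b^2 ≤ p*(p-1)*(2^(p-2) * (|a|^(p-2) + |b|^(p-2)))*b^2 := by
      have hb2 : (0:ℝ) ≤ b^2 := sq_nonneg b
      have hpp : (0:ℝ) ≤ p*(p-1) := by nlinarith
      nlinarith [mul_le_mul_of_nonneg_left hRb hpp]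
    calc p*(p-1)*R^(p-2)*b^2 ≤ p*(p-1)*(2^(p-2) * (|a|^(p-2) + |b|^(p-2)))*b^2 := h6
      _ = p*(p-1)*2^(p-2) * (|a| ^ (p-2) * b^2 + |b| ^ (p-2) * b^2) := by ring
      _ = p*(p-1)*2^(p-2) * (|a| ^ (p-2) * b^2 + |b| ^ p) := by
          rw [abs_rpow_sub_two_mul_sq hp b]
  rw [e1, e2] at hMVT2
  rw [← e3]
  linarith [hMVT2, hfinal]


lemma jensen_rpow {Ω : Type*} [MeasurableSpace Ω] (P : Measure Ω) [IsProbabilityMeasure P]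
    {f : Ω → ℝ} {q r : ℝ} (hq : 0 < q) (hqr : q ≤ r) (hf : MemLp f (ENNReal.ofReal r) P) :
    ∫ ω, |f ω| ^ q ∂P ≤ (∫ ω, |f ω| ^ r ∂P) ^ (q/r) := by
  have hr : 0 < r := hq.trans_le hqr
  have hfq : MemLp f (ENNReal.ofReal q) P :=
    hf.mono_exponent (ENNReal.ofReal_le_ofReal hqr)
  have hq0 : ENNReal.ofReal q ≠ 0 := (ENNReal.ofReal_pos.2 hq).ne'
  have hr0 : ENNReal.ofReal r ≠ 0 := (ENNReal.ofReal_pos.2 hr).ne'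
  have eq_q := hfq.eLpNorm_eq_integral_rpow_norm hq0 ENNReal.ofReal_ne_top
  have eq_r := hf.eLpNorm_eq_integral_rpow_norm hr0 ENNReal.ofReal_ne_top
  have hle : eLpNorm f (ENNReal.ofReal q) P ≤ eLpNorm f (ENNReal.ofReal r) P :=
    eLpNorm_le_eLpNorm_of_exponent_le (ENNReal.ofReal_le_ofReal hqr) hf.1
  rw [eq_q, eq_r] at hle
  rw [ENNReal.ofReal_le_ofReal_iff (by positivity)] at hle
  simp only [Real.norm_eq_abs, ENNReal.toReal_ofReal hq.le, ENNReal.toReal_ofReal hr.le] at hle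
  have Iq0 : (0:ℝ) ≤ ∫ ω, |f ω| ^ q ∂P :=
    integral_nonneg fun ω => Real.rpow_nonneg (abs_nonneg _) _
  have Ir0 : (0:ℝ) ≤ ∫ ω, |f ω| ^ r ∂P :=
    integral_nonneg fun ω => Real.rpow_nonneg (abs_nonneg _) _
  have h2 := Real.rpow_le_rpow (by positivity) hle hq.le
  rwa [← Real.rpow_mul Iq0, ← Real.rpow_mul Ir0, inv_mul_cancel₀ hq.ne', Real.rpow_one,
    show r⁻¹ * q = q / r by field_simp] at h2

lemma growth {A : ℕ → ℝ} {c m2 mp p : ℝ} (hp : 2 < p) (hc : 0 ≤ c) (hm2 : 0 ≤ m2)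
    (hmp : 0 ≤ mp) (hA : ∀ n, 0 ≤ A n)
    (hrec : ∀ n, A (n+1) ≤ A n + c * ((A n)^((p-2)/p) * m2 + mp)) :
    ∃ K : ℝ, 0 < K ∧ ∀ n, A n ≤ K * ((n:ℝ)+1)^(p/2) := by
  have hp0 : (0:ℝ) < p := by linarith
  set K := max (max 1 (A 0)) (max ((4*c*m2/p)^(p/2)) (4*c*mp/p)) with hK
  have hK1 : (1:ℝ) ≤ K := le_max_of_le_left (le_max_left _ _)
  have hKpos : (0:ℝ) < K := by linarith
  have hKm2 : c*m2*K^((p-2)/p) ≤ (p/4)*K := by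
    have hbase : (0:ℝ) ≤ 4*c*m2/p := by positivity
    have h1 : (4*c*m2/p)^(p/2) ≤ K := le_max_of_le_right (le_max_left _ _)
    have h2 : 4*c*m2/p ≤ K^(2/p) := by
      have := Real.rpow_le_rpow (Real.rpow_nonneg hbase _) h1 (by positivity : (0:ℝ) ≤ 2/p)
      rwa [← Real.rpow_mul hbase, show p/2*(2/p) = 1 by field_simp, Real.rpow_one] at this
    have h3 : (4*c*m2/p) * K^((p-2)/p) ≤ K^(2/p) * K^((p-2)/p) :=
      mul_le_mul_of_nonneg_right h2 (Real.rpow_nonneg hKpos.le _)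
    rw [← Real.rpow_add hKpos, show 2/p + (p-2)/p = 1 by field_simp; ring, Real.rpow_one] at h3
    have h4 : c*m2*K^((p-2)/p) = p/4 * (4*c*m2/p * K^((p-2)/p)) := by field_simp
    rw [h4]
    exact mul_le_mul_of_nonneg_left h3 (by positivity)
  have hKmp : c*mp ≤ (p/4)*K := by
    have h1 : 4*c*mp/p ≤ K := le_max_of_le_right (le_max_right _ _)
    have h4 : c*mp = p/4 * (4*c*mp/p) := by field_simp
    rw [h4]
    exact mul_le_mul_of_nonneg_left h1 (by positivity)
  refine ⟨K, hKpos, ?_⟩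
  intro n
  induction n with
  | zero =>
    simp only [Nat.cast_zero, zero_add, Real.one_rpow, mul_one]
    exact le_max_of_le_left (le_max_right _ _)
  | succ n ih =>
    have hn1 : (0:ℝ) < (n:ℝ) + 1 := by positivity
    have hexp : (0:ℝ) ≤ (p-2)/p := div_nonneg (by linarith) hp0.le
    have h1 : (A n)^((p-2)/p) ≤ (K * ((n:ℝ)+1)^(p/2))^((p-2)/p) :=
      Real.rpow_le_rpow (hA n) ih hexp
    have h2 : (K * ((n:ℝ)+1)^(p/2))^((p-2)/p) = K^((p-2)/p) * ((n:ℝ)+1)^((p-2)/2) := by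
      rw [Real.mul_rpow hKpos.le (Real.rpow_nonneg hn1.le _), ← Real.rpow_mul hn1.le,
        show p/2*((p-2)/p) = (p-2)/2 by field_simp]
    have hKp2 : K^((p-2)/p) ≤ K := by
      calc K^((p-2)/p) ≤ K^(1:ℝ) :=
            Real.rpow_le_rpow_of_exponent_le hK1 (by rw [div_le_one hp0]; linarith)
        _ = K := Real.rpow_one K
    have hone_le : (1:ℝ) ≤ ((n:ℝ)+1)^((p-2)/2) := by
      have h0 := Real.rpow_le_rpow zero_le_one (by linarith : (1:ℝ) ≤ (n:ℝ)+1)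
        (div_nonneg (by linarith : (0:ℝ) ≤ p-2) (by norm_num : (0:ℝ) ≤ 2))
      rwa [Real.one_rpow] at h0
    have hBern : ((n:ℝ)+1)^(p/2) + (p/2)*((n:ℝ)+1)^((p-2)/2) ≤ ((n:ℝ)+2)^(p/2) := by
      have hb := one_add_mul_self_le_rpow_one_add
        (s := 1/((n:ℝ)+1)) (le_trans (by norm_num : (-1:ℝ) ≤ 0) (by positivity)) (p := p/2) (by linarith)
      have h4 := mul_le_mul_of_nonneg_left hb (Real.rpow_nonneg hn1.le (p/2))
      rw [← Real.mul_rpow hn1.le (by positivity)] at h4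
      have e1 : ((n:ℝ)+1) * (1 + 1/((n:ℝ)+1)) = (n:ℝ)+2 := by field_simp; ring
      rw [e1] at h4
      have e2 : ((n:ℝ)+1)^(p/2) * (1 + p/2 * (1/((n:ℝ)+1)))
          = ((n:ℝ)+1)^(p/2) + (p/2)*(((n:ℝ)+1)^(p/2) / ((n:ℝ)+1)) := by ring
      have e3 : ((n:ℝ)+1)^(p/2) / ((n:ℝ)+1) = ((n:ℝ)+1)^((p-2)/2) := by
        rw [show (p-2)/2 = p/2 - 1 by ring, Real.rpow_sub hn1, Real.rpow_one]
      rw [e2, e3] at h4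
      exact h4
    have step1 : A (n+1) ≤ K*((n:ℝ)+1)^(p/2) + c*m2*(K^((p-2)/p) * ((n:ℝ)+1)^((p-2)/2)) + c*mp := by
      have := hrec n
      have h5 : (A n)^((p-2)/p) * m2 ≤ K^((p-2)/p) * ((n:ℝ)+1)^((p-2)/2) * m2 := by
        have := h1.trans_eq h2
        exact mul_le_mul_of_nonneg_right this hm2
      nlinarith [this, h5, ih]
    have step2 : c*m2*(K^((p-2)/p) * ((n:ℝ)+1)^((p-2)/2)) ≤ (p/4)*K*((n:ℝ)+1)^((p-2)/2) := by
      have h6 : c*m2*K^((p-2)/p) ≤ (p/4)*K := hKm2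
      have h7 : (0:ℝ) ≤ ((n:ℝ)+1)^((p-2)/2) := by linarith
      nlinarith [mul_le_mul_of_nonneg_right h6 h7]
    have step3 : c*mp ≤ (p/4)*K*((n:ℝ)+1)^((p-2)/2) := by
      have h8 := mul_le_mul_of_nonneg_left hone_le
        (le_of_lt (show (0:ℝ) < p/4*K from by positivity))
      rw [mul_one] at h8
      nlinarith [h8]
    have hfin : A (n+1) ≤ K * (((n:ℝ)+1)^(p/2) + (p/2)*((n:ℝ)+1)^((p-2)/2)) := by
      nlinarith [step1, step2, step3]
    calc A (n+1) ≤ K * (((n:ℝ)+1)^(p/2) + (p/2)*((n:ℝ)+1)^((p-2)/2)) := hfin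
      _ ≤ K * ((n:ℝ)+2)^(p/2) := mul_le_mul_of_nonneg_left hBern hKpos.le
      _ = K * ((↑(n+1):ℝ)+1)^(p/2) := by push_cast; ring_nf

/-- If `X, X₁, X₂, …` are i.i.d. with `E[|X|^α] < ∞` for some `α > 2` and `E[X] = 0`, then for
any `2 < p ≤ α` and any `β > (p+2)/2`, `∑ₙ n^{-β} E[|Sₙ|^p] < ∞`. -/
theorem stmt2 {Ω : Type*} [MeasurableSpace Ω] (P : Measure Ω) [IsProbabilityMeasure P]
    (X : ℕ → Ω → ℝ) (X0 : Ω → ℝ) (α : ℝ) (hα : 2 < α)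
    (hmeas : ∀ i, Measurable (X i)) (hmeas0 : Measurable X0)
    (hindep : iIndepFun X P)
    (hident : ∀ i, IdentDistrib (X i) X0 P P)
    (hmom : Integrable (fun ω => |X0 ω| ^ α) P)
    (hmean : ∫ ω, X0 ω ∂P = 0)
    (p β : ℝ) (hp2 : 2 < p) (hpα : p ≤ α) (hβ : (p + 2) / 2 < β) :
    Summable (fun n : ℕ =>
      ((n : ℝ) + 1) ^ (-β) * ∫ ω, |∑ i ∈ Finset.range (n + 1), X i ω| ^ p ∂P) := by
  have hp0 : (0:ℝ) < p := by linarith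
  have hpm_pos : (0:ℝ) < p - 2 := by linarith
  set S : ℕ → Ω → ℝ := fun n ω => ∑ i ∈ Finset.range n, X i ω with hS
  have hSmeas : ∀ n, Measurable (S n) := fun n =>
    Finset.measurable_sum (Finset.range n) (fun i _ => hmeas i)
  -- integrability of |X0|^q for q ≤ α
  have hq_int : ∀ q : ℝ, 0 < q → q ≤ α → Integrable (fun ω => |X0 ω| ^ q) P := by
    intro q hq hqα
    refine Integrable.mono' ((integrable_const (1:ℝ)).add hmom) ?_ ?_
    · exact (hmeas0.abs.pow_const q).aestronglyMeasurable
    · filter_upwards with ω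
      rw [Real.norm_eq_abs, abs_of_nonneg (Real.rpow_nonneg (abs_nonneg _) _)]
      have h0 : (0:ℝ) ≤ |X0 ω| ^ α := Real.rpow_nonneg (abs_nonneg _) _
      rcases le_total (|X0 ω|) 1 with h | h
      · have h1 : |X0 ω| ^ q ≤ 1 := Real.rpow_le_one (abs_nonneg _) h hq.le
        simp only [Pi.add_apply]
        linarith
      · have h1 : |X0 ω| ^ q ≤ |X0 ω| ^ α := Real.rpow_le_rpow_of_exponent_le h hqα
        simp only [Pi.add_apply]
        linarith
  have hX0_int : Integrable X0 P := by
    have h := hq_int 1 one_pos (by linarith)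
    simp only [Real.rpow_one] at h
    rw [show (fun ω => |X0 ω|) = fun ω => ‖X0 ω‖ from by ext ω; rw [Real.norm_eq_abs]] at h
    rwa [integrable_norm_iff hmeas0.aestronglyMeasurable] at h
  have hX0p_int : Integrable (fun ω => |X0 ω| ^ p) P := hq_int p hp0 hpα
  have hX02_int : Integrable (fun ω => (X0 ω) ^ 2) P := by
    have h := hq_int 2 two_pos (by linarith)
    have he : (fun ω => |X0 ω| ^ (2:ℝ)) = fun ω => (X0 ω) ^ 2 := by
      ext ω
      rw [show ((2:ℝ)) = ((2:ℕ):ℝ) by norm_num, Real.rpow_natCast, sq_abs]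
    rwa [he] at h
  -- Memℒp X0 p
  have hq0 : (ENNReal.ofReal p) ≠ 0 := (ENNReal.ofReal_pos.2 hp0).ne'
  have hX0p : MemLp X0 (ENNReal.ofReal p) P := by
    have h2 : MemLp (fun ω => ‖X0 ω‖ ^ (ENNReal.ofReal p).toReal)
        ((ENNReal.ofReal p)/(ENNReal.ofReal p)) P := by
      rw [ENNReal.div_self hq0 ENNReal.ofReal_ne_top, memLp_one_iff_integrable]
      simpa [Real.norm_eq_abs, ENNReal.toReal_ofReal hp0.le] using hX0p_int
    exact (memLp_norm_rpow_iff hmeas0.aestronglyMeasurable hq0 ENNReal.ofReal_ne_top).1 h2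
  have hXip : ∀ i, MemLp (X i) (ENNReal.ofReal p) P := fun i => (hident i).symm.memLp_snd hX0p
  have hSp : ∀ n, MemLp (S n) (ENNReal.ofReal p) P := fun n =>
    memLp_finset_sum (Finset.range n) (fun i _ => hXip i)
  have hS_int : ∀ (n : ℕ) (q : ℝ), 0 < q → q ≤ p → Integrable (fun ω => |S n ω| ^ q) P := by
    intro n q hq hqp
    have h1 : MemLp (S n) (ENNReal.ofReal q) P :=
      (hSp n).mono_exponent (ENNReal.ofReal_le_ofReal hqp)
    have h2 := h1.integrable_norm_rpow (ENNReal.ofReal_pos.2 hq).ne' ENNReal.ofReal_ne_top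
    simpa [Real.norm_eq_abs, ENNReal.toReal_ofReal hq.le] using h2
  -- independence of S n and X n
  have hind : ∀ n, IndepFun (S n) (X n) P := by
    intro n
    have h := hindep.indepFun_finset_sum_of_notMem hmeas (Finset.notMem_range_self (n := n))
    have he : (∑ j ∈ Finset.range n, X j) = S n := by
      ext ω; simp [hS, Finset.sum_apply]
    rwa [he] at h
  -- measurable real functions
  have habs_meas : Measurable (fun s : ℝ => |s| ^ (p-2)) :=
    (continuous_abs.rpow_const (fun _ => Or.inr (by linarith))).measurable
  have hφmeas : Measurable (fun s : ℝ => p * s * |s| ^ (p-2)) :=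
    (measurable_const.mul measurable_id).mul habs_meas
  have hsqmeas : Measurable (fun x : ℝ => x ^ 2) := measurable_id.pow_const 2
  have habsp_meas : Measurable (fun s : ℝ => |s| ^ p) :=
    (continuous_abs.rpow_const (fun _ => Or.inr hp0.le)).measurable
  -- moments of X n
  have hm2_eq : ∀ n, ∫ ω, (X n ω) ^ 2 ∂P = ∫ ω, (X0 ω) ^ 2 ∂P := fun n =>
    ((hident n).comp hsqmeas).integral_eq
  have hmp_eq : ∀ n, ∫ ω, |X n ω| ^ p ∂P = ∫ ω, |X0 ω| ^ p ∂P := fun n =>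
    ((hident n).comp habsp_meas).integral_eq
  have hmean_n : ∀ n, ∫ ω, X n ω ∂P = 0 := fun n => (hident n).integral_eq.trans hmean
  have hXn_int : ∀ n, Integrable (X n) P := fun n => (hident n).symm.integrable_snd hX0_int
  have hXn2_int : ∀ n, Integrable (fun ω => (X n ω) ^ 2) P := fun n =>
    ((hident n).comp hsqmeas).symm.integrable_snd hX02_int
  have hXnp_int : ∀ n, Integrable (fun ω => |X n ω| ^ p) P := fun n =>
    ((hident n).comp habsp_meas).symm.integrable_snd hX0p_int
  set m2 : ℝ := ∫ ω, (X0 ω) ^ 2 ∂P with hm2def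
  set mp : ℝ := ∫ ω, |X0 ω| ^ p ∂P with hmpdef
  have hm2nn : 0 ≤ m2 := integral_nonneg fun ω => sq_nonneg _
  have hmpnn : 0 ≤ mp := integral_nonneg fun ω => Real.rpow_nonneg (abs_nonneg _) _
  set c : ℝ := p*(p-1)*2^(p-2) with hcdef
  have hc : 0 ≤ c := by
    have h2 : (0:ℝ) ≤ (2:ℝ) ^ (p-2) := Real.rpow_nonneg (by norm_num) _
    have : (0:ℝ) ≤ p * (p-1) := by nlinarith
    rw [hcdef]; positivity
  set A : ℕ → ℝ := fun n => ∫ ω, |S (n+1) ω| ^ p ∂P with hAdef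
  have hA_nonneg : ∀ n, 0 ≤ A n := fun n =>
    integral_nonneg fun ω => Real.rpow_nonneg (abs_nonneg _) _
  -- the recursion
  have hrec : ∀ n, A (n+1) ≤ A n + c * ((A n) ^ ((p-2)/p) * m2 + mp) := by
    intro n
    set N := n + 1 with hN
    have hpoint : ∀ ω, |S (N+1) ω| ^ p ≤ |S N ω| ^ p + (p * S N ω * |S N ω| ^ (p-2)) * X N ω
        + c * (|S N ω| ^ (p-2) * (X N ω) ^ 2 + |X N ω| ^ p) := by
      intro ω
      have he : S (N+1) ω = S N ω + X N ω := by
        simp [hS, Finset.sum_range_succ]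
      rw [he]
      exact key_ineq hp2 (S N ω) (X N ω)
    have int1 : Integrable (fun ω => |S N ω| ^ p) P := hS_int N p hp0 le_rfl
    have intpm2 : Integrable (fun ω => |S N ω| ^ (p-2)) P :=
      hS_int N (p-2) hpm_pos (by linarith)
    have intφ : Integrable (fun ω => p * S N ω * |S N ω| ^ (p-2)) P := by
      refine Integrable.mono' ((hS_int N (p-1) (by linarith) (by linarith)).const_mul p) ?_ ?_
      · exact (hφmeas.comp (hSmeas N)).aestronglyMeasurable
      · filter_upwards with ω
        rw [Real.norm_eq_abs, abs_mul, abs_mul, abs_of_nonneg hp0.le,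
          abs_of_nonneg (Real.rpow_nonneg (abs_nonneg _) _)]
        rcases eq_or_ne (S N ω) 0 with h0 | h0
        · rw [h0, abs_zero, Real.zero_rpow (show p - 1 ≠ 0 by linarith),
            Real.zero_rpow (show p - 2 ≠ 0 by linarith)]
          norm_num
        · have he2 : |S N ω| * |S N ω| ^ (p-2) = |S N ω| ^ (p-1) := by
            nth_rewrite 1 [show |S N ω| = |S N ω| ^ (1:ℝ) from (Real.rpow_one _).symm]
            rw [← Real.rpow_add (abs_pos.2 h0), show (1:ℝ) + (p-2) = p - 1 by ring]
          rw [mul_assoc, he2]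
    have hφind : IndepFun (fun ω => p * S N ω * |S N ω| ^ (p-2)) (X N) P := by
      have h := (hind N).comp hφmeas measurable_id
      exact h
    have hpsind : IndepFun (fun ω => |S N ω| ^ (p-2)) (fun ω => (X N ω) ^ 2) P :=
      (hind N).comp habs_meas hsqmeas
    have int2 : Integrable (fun ω => (p * S N ω * |S N ω| ^ (p-2)) * X N ω) P :=
      hφind.integrable_mul intφ (hXn_int N)
    have int3 : Integrable (fun ω => |S N ω| ^ (p-2) * (X N ω) ^ 2) P :=
      hpsind.integrable_mul intpm2 (hXn2_int N)
    have int4 : Integrable (fun ω => |X N ω| ^ p) P := hXnp_int N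
    have intLHS : Integrable (fun ω => |S (N+1) ω| ^ p) P := hS_int (N+1) p hp0 le_rfl
    have intRHS : Integrable (fun ω => |S N ω| ^ p + (p * S N ω * |S N ω| ^ (p-2)) * X N ω
        + c * (|S N ω| ^ (p-2) * (X N ω) ^ 2 + |X N ω| ^ p)) P := by
      exact (int1.add int2).add ((int3.add int4).const_mul c)
    have hmono := integral_mono intLHS intRHS hpoint
    have int12 : Integrable (fun ω => |S N ω| ^ p + (p * S N ω * |S N ω| ^ (p-2)) * X N ω) P := by
      exact int1.add int2
    have int34 : Integrable (fun ω => |S N ω| ^ (p-2) * (X N ω) ^ 2 + |X N ω| ^ p) P := by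
      exact int3.add int4
    have int34c : Integrable (fun ω => c * (|S N ω| ^ (p-2) * (X N ω) ^ 2 + |X N ω| ^ p)) P := by
      exact int34.const_mul c
    rw [integral_add int12 int34c, integral_add int1 int2, integral_const_mul c,
      integral_add int3 int4] at hmono
    have hcross : ∫ ω, (p * S N ω * |S N ω| ^ (p-2)) * X N ω ∂P = 0 := by
      have h := hφind.integral_mul_eq_mul_integral intφ.aestronglyMeasurable (hXn_int N).aestronglyMeasurable
      rw [hmean_n N, mul_zero] at h
      exact h
    have hfact : ∫ ω, |S N ω| ^ (p-2) * (X N ω) ^ 2 ∂P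
        = (∫ ω, |S N ω| ^ (p-2) ∂P) * m2 := by
      have h := hpsind.integral_mul_eq_mul_integral intpm2.aestronglyMeasurable (hXn2_int N).aestronglyMeasurable
      rw [hm2_eq N] at h
      exact h
    rw [hcross, add_zero, hfact, hmp_eq N] at hmono
    have hJ : ∫ ω, |S N ω| ^ (p-2) ∂P ≤ (A n) ^ ((p-2)/p) := by
      have h := jensen_rpow P (f := S N) hpm_pos (by linarith : p - 2 ≤ p) (hSp N)
      exact h
    have hfin : (∫ ω, |S N ω| ^ (p-2) ∂P) * m2 ≤ (A n) ^ ((p-2)/p) * m2 :=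
      mul_le_mul_of_nonneg_right hJ hm2nn
    have : A (n+1) ≤ A n + c * ((∫ ω, |S N ω| ^ (p-2) ∂P) * m2 + mp) := hmono
    nlinarith [this, hfin, hc]
  obtain ⟨K, hKpos, hbound⟩ := growth hp2 hc hm2nn hmpnn hA_nonneg hrec
  have hsum : Summable (fun n : ℕ => K * ((n:ℝ)+1) ^ (p/2 - β)) := by
    have h1 : p/2 - β < -1 := by linarith
    have h2 : Summable (fun n : ℕ => ((n:ℝ)) ^ (p/2-β)) := Real.summable_nat_rpow.2 h1
    have h3 := (summable_nat_add_iff 1).2 h2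
    have h4 : Summable (fun n : ℕ => ((n:ℝ)+1) ^ (p/2-β)) := by
      convert h3 using 2 with n
      push_cast
      rfl
      exact_mod_cast rfl
    exact h4.mul_left K
  refine Summable.of_nonneg_of_le ?_ ?_ hsum
  · intro n
    exact mul_nonneg (Real.rpow_nonneg (by positivity) _)
      (integral_nonneg fun ω => Real.rpow_nonneg (abs_nonneg _) _)
  · intro n
    have heq : (∫ ω, |∑ i ∈ Finset.range (n+1), X i ω| ^ p ∂P) = A n := rfl
    rw [heq]
    have hnpos : (0:ℝ) < (n:ℝ)+1 := by positivity
    calc ((n:ℝ)+1) ^ (-β) * A n ≤ ((n:ℝ)+1) ^ (-β) * (K * ((n:ℝ)+1) ^ (p/2)) :=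
          mul_le_mul_of_nonneg_left (hbound n) (Real.rpow_nonneg hnpos.le _)
      _ = K * (((n:ℝ)+1) ^ (-β) * ((n:ℝ)+1) ^ (p/2)) := by ring
      _ = K * ((n:ℝ)+1) ^ (p/2 - β) := by
          rw [← Real.rpow_add hnpos, show -β + p/2 = p/2 - β by ring]
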